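/- With a_{n,k} the admissible matrix of a sequence s, the shifted Hankel determinant D_{1,n} = det(a_{i+j+1,0})_{i,j=0}^{n-1} satisfies the recurrence D_{1,n} = s_{n-1}·D_{1,n-1} - D_{1,n-2} with D_{1,0} = 1 and D_{1,1} = s_0; equivalently D_{1,n} equals the determinant of the n×n tridiagonal matrix with diagonal entries s_0, ..., s_{n-1} and 1's on the sub- and super-diagonals. -/
import Mathlib
open Matrix

noncomputable def triMat (s : ℕ → ℝ) (n : ℕ) : Matrix (Fin n) (Fin n) ℝ :=
  Matrix.of fun i j =>
    if (i : ℕ) = (j : ℕ) then s i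
    else if (i : ℕ) + 1 = (j : ℕ) ∨ (j : ℕ) + 1 = (i : ℕ) then 1 else 0

lemma tri_eq (s : ℕ → ℝ) {m m' : ℕ} (i j : Fin m) (i' j' : Fin m')
    (hi : (i:ℕ) = (i':ℕ)) (hj : (j:ℕ) = (j':ℕ)) : triMat s m i j = triMat s m' i' j' := by
  simp only [triMat, Matrix.of_apply, hi, hj]

lemma succAbove_val {m : ℕ} (j : Fin (m+1)) (x : Fin m) :
    ((j.succAbove x) : ℕ) = if (x:ℕ) < (j:ℕ) then (x:ℕ) else (x:ℕ)+1 := by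
  rcases lt_or_ge ((x:ℕ)) (j:ℕ) with h | h
  · rw [Fin.succAbove_of_castSucc_lt _ _ (by simpa [Fin.lt_def] using h), if_pos h,
      Fin.coe_castSucc]
  · rw [Fin.succAbove_of_le_castSucc _ _ (by simpa [Fin.le_def] using h),
      if_neg (not_lt.2 h), Fin.val_succ]

lemma triMat_det_rec (s : ℕ → ℝ) (n : ℕ) :
    (triMat s (n + 2)).det = s (n + 1) * (triMat s (n + 1)).det - (triMat s n).det := by
  have hmain := Matrix.det_succ_row (triMat s (n + 2)) (Fin.last (n + 1))
  rw [Fin.sum_univ_castSucc, Fin.sum_univ_castSucc] at hmain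
  have hzero : ∀ j : Fin n,
      ((-1 : ℝ) ^ ((Fin.last (n+1) : ℕ) + ((j.castSucc.castSucc : Fin (n+2)) : ℕ)) *
        triMat s (n+2) (Fin.last (n+1)) j.castSucc.castSucc *
        ((triMat s (n+2)).submatrix (Fin.last (n+1)).succAbove
          (j.castSucc.castSucc).succAbove).det) = 0 := by
    intro j
    have hj : (j : ℕ) < n := j.isLt
    have h : triMat s (n+2) (Fin.last (n+1)) j.castSucc.castSucc = 0 := by
      simp only [triMat, Matrix.of_apply, Fin.coe_castSucc, Fin.val_last]
      split_ifs <;> first | rfl | (exfalso; omega) | simp_all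
    rw [h]; ring
  rw [Finset.sum_eq_zero fun j _ => hzero j, zero_add] at hmain
  have hsub1 : (triMat s (n+2)).submatrix (Fin.last (n+1)).succAbove
      (Fin.last (n+1)).succAbove = triMat s (n+1) := by
    ext i j
    rw [Matrix.submatrix_apply]
    exact tri_eq s _ _ _ _ (by simp [Fin.succAbove_last]) (by simp [Fin.succAbove_last])
  have hent1 : triMat s (n+2) (Fin.last (n+1)) (Fin.last (n+1)) = s (n+1) := by
    simp [triMat]
  have hsgn1 : ((-1:ℝ)) ^ ((Fin.last (n+1) : ℕ) + (Fin.last (n+1) : ℕ)) = 1 := by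
    rw [Fin.val_last, ← two_mul, pow_mul]; norm_num
  have hent2 : triMat s (n+2) (Fin.last (n+1)) (Fin.last n).castSucc = 1 := by
    simp only [triMat, Matrix.of_apply, Fin.coe_castSucc, Fin.val_last]
    split_ifs <;> first | rfl | (exfalso; omega) | simp_all
  have hsgn2 : ((-1:ℝ)) ^ ((Fin.last (n+1) : ℕ) + ((Fin.last n).castSucc : ℕ)) = -1 := by
    rw [Fin.val_last, Fin.coe_castSucc, Fin.val_last]
    have h : n + 1 + n = 2*n + 1 := by ring
    rw [h, pow_succ, pow_mul]; norm_num
  set B := (triMat s (n+2)).submatrix (Fin.last (n+1)).succAbove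
      ((Fin.last n).castSucc.succAbove) with hB
  have hBdet : B.det = (triMat s n).det := by
    have h2 := Matrix.det_succ_column B (Fin.last n)
    rw [Fin.sum_univ_castSucc] at h2
    have hz2 : ∀ i : Fin n,
        ((-1 : ℝ) ^ (((i.castSucc : Fin (n+1)) : ℕ) + ((Fin.last n : Fin (n+1)) : ℕ)) *
          B i.castSucc (Fin.last n) *
          (B.submatrix i.castSucc.succAbove (Fin.last n).succAbove).det) = 0 := by
      intro i
      have hi : (i : ℕ) < n := i.isLt
      have h : B i.castSucc (Fin.last n) = 0 := by
        rw [hB, Matrix.submatrix_apply]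
        simp only [triMat, Matrix.of_apply, succAbove_val, Fin.val_last, Fin.coe_castSucc]
        split_ifs <;> first | rfl | (exfalso; omega) | simp_all
      rw [h]; ring
    rw [Finset.sum_eq_zero fun i _ => hz2 i, zero_add] at h2
    have hentB : B (Fin.last n) (Fin.last n) = 1 := by
      rw [hB, Matrix.submatrix_apply]
      simp only [triMat, Matrix.of_apply, succAbove_val, Fin.val_last, Fin.coe_castSucc]
      split_ifs <;> first | rfl | (exfalso; omega) | simp_all
    have hsgnB : ((-1:ℝ)) ^ ((Fin.last n : ℕ) + (Fin.last n : ℕ)) = 1 := by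
      rw [Fin.val_last, ← two_mul, pow_mul]; norm_num
    have hsubB : B.submatrix (Fin.last n).succAbove (Fin.last n).succAbove = triMat s n := by
      ext k l
      have hk : (k : ℕ) < n := k.isLt
      have hl : (l : ℕ) < n := l.isLt
      rw [Matrix.submatrix_apply, hB, Matrix.submatrix_apply]
      refine tri_eq s _ _ _ _ ?_ ?_
      · rw [succAbove_val]
        simp only [succAbove_val, Fin.val_last, Fin.coe_castSucc]
        split_ifs <;> omega
      · rw [succAbove_val]
        simp only [succAbove_val, Fin.val_last, Fin.coe_castSucc]
        split_ifs <;> omega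
    rw [hentB, hsgnB, hsubB] at h2
    rw [h2]; ring
  rw [hsub1, hent1, hsgn1, hent2, hsgn2, hBdet] at hmain
  rw [hmain]; ring

section
variable (s : ℕ → ℝ) (a : ℕ → ℤ → ℝ)

lemma adm_vanish (h0 : ∀ k : ℤ, a 0 k = if k = 0 then 1 else 0)
    (hrec : ∀ (n : ℕ) (k : ℤ), 0 ≤ k →
      a (n + 1) k = a n (k - 1) + s k.toNat * a n k + a n (k + 1)) :
    ∀ (n : ℕ) (k : ℤ), (n : ℤ) < k → a n k = 0 := by
  intro n
  induction n with
  | zero => intro k hk; rw [h0]; rw [if_neg (by omega)]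
  | succ n ih =>
    intro k hk
    have hk0 : 0 ≤ k := by omega
    rw [hrec n k hk0, ih (k-1) (by push_cast; omega), ih k (by push_cast; omega),
      ih (k+1) (by push_cast; omega)]
    ring

lemma adm_diag (h0 : ∀ k : ℤ, a 0 k = if k = 0 then 1 else 0)
    (hrec : ∀ (n : ℕ) (k : ℤ), 0 ≤ k →
      a (n + 1) k = a n (k - 1) + s k.toNat * a n k + a n (k + 1)) :
    ∀ n : ℕ, a n (n : ℤ) = 1 := by
  intro n
  induction n with
  | zero => rw [h0]; norm_num
  | succ n ih =>
    have hv := adm_vanish s a h0 hrec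
    push_cast
    rw [hrec n ((n:ℤ)+1) (by positivity)]
    rw [show (n:ℤ)+1-1 = (n:ℤ) by ring, ih, hv n ((n:ℤ)+1) (by omega),
      hv n ((n:ℤ)+1+1) (by omega)]
    ring

lemma adm_mom (h0 : ∀ k : ℤ, a 0 k = if k = 0 then 1 else 0)
    (hneg : ∀ (n : ℕ) (k : ℤ), k < 0 → a n k = 0)
    (hrec : ∀ (n : ℕ) (k : ℤ), 0 ≤ k →
      a (n + 1) k = a n (k - 1) + s k.toNat * a n k + a n (k + 1)) :
    ∀ (m p N : ℕ), m + p < N →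
      a (m + p) 0 = ∑ k ∈ Finset.range N, a m (k : ℤ) * a p (k : ℤ) := by
  have hv := adm_vanish s a h0 hrec
  intro m
  induction m with
  | zero =>
    intro p N hN
    have he : ∀ k ∈ Finset.range N, a 0 (k:ℤ) * a p (k:ℤ)
        = if k = 0 then a p 0 else 0 := by
      intro k _
      rw [h0]
      split_ifs with h1 h2 h2 <;> first | (exfalso; omega) | simp | ring_nf
      · rw [h2]; norm_num
    rw [Finset.sum_congr rfl he, Finset.sum_ite_eq' (Finset.range N) 0 (fun _ => a p 0),
      if_pos (Finset.mem_range.2 (by omega)), zero_add]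
  | succ m ih =>
    intro p N hN
    have h1 : m + 1 + p = m + (p + 1) := by omega
    rw [h1, ih (p+1) N (by omega)]
    -- expand a (p+1) k and a (m+1) k
    have hL : ∀ k ∈ Finset.range N, a m (k:ℤ) * a (p+1) (k:ℤ)
        = a m (k:ℤ) * a p ((k:ℤ)-1) + s k * (a m (k:ℤ) * a p (k:ℤ))
          + a m (k:ℤ) * a p ((k:ℤ)+1) := by
      intro k _
      rw [hrec p (k:ℤ) (by positivity)]
      simp only [Int.toNat_natCast]
      ring
    have hR : ∀ k ∈ Finset.range N, a (m+1) (k:ℤ) * a p (k:ℤ)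
        = a m ((k:ℤ)-1) * a p (k:ℤ) + s k * (a m (k:ℤ) * a p (k:ℤ))
          + a m ((k:ℤ)+1) * a p (k:ℤ) := by
      intro k _
      rw [hrec m (k:ℤ) (by positivity)]
      simp only [Int.toNat_natCast]
      ring
    rw [Finset.sum_congr rfl hL, Finset.sum_congr rfl hR,
      Finset.sum_add_distrib, Finset.sum_add_distrib,
      Finset.sum_add_distrib, Finset.sum_add_distrib]
    obtain ⟨N', rfl⟩ : ∃ N', N = N' + 1 := ⟨N - 1, by omega⟩
    have hshift1 : ∑ k ∈ Finset.range (N'+1), a m (k:ℤ) * a p ((k:ℤ)-1)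
        = ∑ k ∈ Finset.range (N'+1), a m ((k:ℤ)+1) * a p (k:ℤ) := by
      rw [Finset.sum_range_succ' (fun k => a m (k:ℤ) * a p ((k:ℤ)-1)) N',
        Finset.sum_range_succ (fun k => a m ((k:ℤ)+1) * a p (k:ℤ)) N']
      have e0 : a m ((0:ℕ):ℤ) * a p (((0:ℕ):ℤ)-1) = 0 := by
        rw [show (((0:ℕ):ℤ)-1) = (-1:ℤ) by norm_num, hneg p (-1) (by omega)]; ring
      have eN : a m ((N':ℤ)+1) * a p (N':ℤ) = 0 := by
        rw [hv m ((N':ℤ)+1) (by omega)]; ring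
      rw [e0, eN, add_zero, add_zero]
      refine Finset.sum_congr rfl fun k _ => ?_
      push_cast
      rw [add_sub_cancel_right]
    have hshift2 : ∑ k ∈ Finset.range (N'+1), a m (k:ℤ) * a p ((k:ℤ)+1)
        = ∑ k ∈ Finset.range (N'+1), a m ((k:ℤ)-1) * a p (k:ℤ) := by
      rw [Finset.sum_range_succ' (fun k => a m ((k:ℤ)-1) * a p (k:ℤ)) N',
        Finset.sum_range_succ (fun k => a m (k:ℤ) * a p ((k:ℤ)+1)) N']
      have e0 : a m (((0:ℕ):ℤ)-1) * a p ((0:ℕ):ℤ) = 0 := by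
        rw [show (((0:ℕ):ℤ)-1) = (-1:ℤ) by norm_num, hneg m (-1) (by omega)]; ring
      have eN : a m (N':ℤ) * a p ((N':ℤ)+1) = 0 := by
        rw [hv p ((N':ℤ)+1) (by omega)]; ring
      rw [e0, eN, add_zero, add_zero]
      refine (Finset.sum_congr rfl fun k _ => ?_).symm
      push_cast
      rw [add_sub_cancel_right]
    rw [hshift1, hshift2]
    ring

lemma adm_step
    (hneg : ∀ (n : ℕ) (k : ℤ), k < 0 → a n k = 0)
    (hrec : ∀ (n : ℕ) (k : ℤ), 0 ≤ k →
      a (n + 1) k = a n (k - 1) + s k.toNat * a n k + a n (k + 1))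
    (hv : ∀ (n : ℕ) (k : ℤ), (n : ℤ) < k → a n k = 0)
    (n j k : ℕ) (hj : j < n) (hk : k < n) :
    a (j+1) (k:ℤ) = ∑ l ∈ Finset.range n,
      (if k = l then s k else if k + 1 = l ∨ l + 1 = k then 1 else 0) * a j (l:ℤ) := by
  have hext : ∑ l ∈ Finset.range n,
      (if k = l then s k else if k + 1 = l ∨ l + 1 = k then 1 else 0) * a j (l:ℤ)
      = ∑ l ∈ Finset.range (n+2),
      (if k = l then s k else if k + 1 = l ∨ l + 1 = k then 1 else 0) * a j (l:ℤ) := by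
    refine Finset.sum_subset (Finset.range_subset_range.2 (by omega)) ?_
    intro l _ hl
    rw [hv j (l:ℤ) (by exact_mod_cast (by simp at hl; omega : j < l)), mul_zero]
  rw [hext]
  have hdecomp : ∀ l ∈ Finset.range (n+2),
      (if k = l then s k else if k + 1 = l ∨ l + 1 = k then 1 else 0) * a j (l:ℤ)
      = (if l = k then s k * a j (k:ℤ) else 0) + (if l = k+1 then a j ((k:ℤ)+1) else 0)
        + (if l = k-1 then a j ((k:ℤ)-1) else 0) := by
    intro l _
    by_cases h1 : k = l
    · subst h1
      rw [if_pos rfl, if_pos rfl, if_neg (by omega)]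
      by_cases h0' : k = 0
      · subst h0'
        rw [if_pos rfl, show ((0:ℕ):ℤ) - 1 = (-1:ℤ) by norm_num, hneg j (-1) (by omega)]
        norm_num
      · rw [if_neg (by omega)]; ring
    · rw [if_neg h1]
      by_cases h2 : l = k + 1
      · rw [if_pos (by omega), if_neg (by omega), if_pos h2, if_neg (by omega)]
        have hc : (l:ℤ) = (k:ℤ) + 1 := by omega
        rw [hc]; ring
      · by_cases h3 : l + 1 = k
        · rw [if_pos (by omega), if_neg (by omega), if_neg h2, if_pos (by omega)]
          have hc : (l:ℤ) = (k:ℤ) - 1 := by omega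
          rw [hc]; ring
        · rw [if_neg (by omega), if_neg (by omega), if_neg h2, if_neg (by omega)]
          ring
  rw [Finset.sum_congr rfl hdecomp, Finset.sum_add_distrib, Finset.sum_add_distrib,
    Finset.sum_ite_eq' (Finset.range (n+2)) k (fun _ => s k * a j (k:ℤ)),
    Finset.sum_ite_eq' (Finset.range (n+2)) (k+1) (fun _ => a j ((k:ℤ)+1)),
    Finset.sum_ite_eq' (Finset.range (n+2)) (k-1) (fun _ => a j ((k:ℤ)-1)),
    if_pos (Finset.mem_range.2 (by omega)), if_pos (Finset.mem_range.2 (by omega)),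
    if_pos (Finset.mem_range.2 (by omega)), hrec j (k:ℤ) (by positivity)]
  simp only [Int.toNat_natCast]
  ring

lemma adm_hankel
    (h0 : ∀ k : ℤ, a 0 k = if k = 0 then 1 else 0)
    (hneg : ∀ (n : ℕ) (k : ℤ), k < 0 → a n k = 0)
    (hrec : ∀ (n : ℕ) (k : ℤ), 0 ≤ k →
      a (n + 1) k = a n (k - 1) + s k.toNat * a n k + a n (k + 1))
    (hv : ∀ (n : ℕ) (k : ℤ), (n : ℤ) < k → a n k = 0)
    (hd : ∀ n : ℕ, a n (n:ℤ) = 1)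
    (hmom : ∀ (m p N : ℕ), m + p < N →
      a (m + p) 0 = ∑ k ∈ Finset.range N, a m (k : ℤ) * a p (k : ℤ))
    (hstep : ∀ (n j k : ℕ), j < n → k < n →
      a (j+1) (k:ℤ) = ∑ l ∈ Finset.range n,
        (if k = l then s k else if k + 1 = l ∨ l + 1 = k then 1 else 0) * a j (l:ℤ))
    (n : ℕ) :
    (Matrix.of fun i j : Fin n => a ((i : ℕ) + (j : ℕ) + 1) 0).det = (triMat s n).det := by
  set M : Matrix (Fin n) (Fin n) ℝ := Matrix.of (fun i k : Fin n => a i ((k:ℕ):ℤ)) with hM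
  have hfact : (Matrix.of fun i j : Fin n => a ((i : ℕ) + (j : ℕ) + 1) 0)
      = M * triMat s n * Mᵀ := by
    ext i j
    have hi : (i:ℕ) < n := i.isLt
    have hj : (j:ℕ) < n := j.isLt
    have e1 : a ((i:ℕ) + (j:ℕ) + 1) 0
        = ∑ k ∈ Finset.range (2*n), a i (k:ℤ) * a ((j:ℕ)+1) (k:ℤ) :=
      hmom i ((j:ℕ)+1) (2*n) (by omega)
    have e2 : ∑ k ∈ Finset.range n, a i (k:ℤ) * a ((j:ℕ)+1) (k:ℤ)
        = ∑ k ∈ Finset.range (2*n), a i (k:ℤ) * a ((j:ℕ)+1) (k:ℤ) := by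
      refine Finset.sum_subset (Finset.range_subset_range.2 (by omega)) ?_
      intro k _ hk
      simp only [Finset.mem_range, not_lt] at hk
      rw [hv i (k:ℤ) (by exact_mod_cast Nat.lt_of_lt_of_le hi hk), zero_mul]
    have e3 : ∀ k ∈ Finset.range n, a i (k:ℤ) * a ((j:ℕ)+1) (k:ℤ)
        = ∑ l ∈ Finset.range n, a i (k:ℤ) *
            ((if k = l then s k else if k + 1 = l ∨ l + 1 = k then 1 else 0) * a j (l:ℤ)) := by
      intro k hk
      rw [hstep n j k hj (Finset.mem_range.1 hk), Finset.mul_sum]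
    rw [Matrix.of_apply, e1, ← e2, Finset.sum_congr rfl e3]
    -- now RHS matrix entry
    rw [Matrix.mul_apply]
    simp only [Matrix.mul_apply, Matrix.transpose_apply, hM, Matrix.of_apply, triMat]
    rw [Finset.sum_comm]
    rw [Fin.sum_univ_eq_sum_range
      (fun l => (∑ k : Fin n, a i ((k:ℕ):ℤ) *
        (if (k:ℕ) = l then s k else if (k:ℕ) + 1 = l ∨ l + 1 = (k:ℕ) then 1 else 0))
        * a j ((l:ℕ):ℤ)) n]
    refine Finset.sum_congr rfl fun l _ => ?_
    rw [Fin.sum_univ_eq_sum_range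
      (fun k => a i ((k:ℕ):ℤ) * if k = l then s k else if k + 1 = l ∨ l + 1 = k then 1 else 0) n,
      Finset.sum_mul]
    exact Finset.sum_congr rfl fun k _ => by ring
  rw [hfact, Matrix.det_mul, Matrix.det_mul, Matrix.det_transpose]
  have hMdet : M.det = 1 := by
    have htri : M.BlockTriangular OrderDual.toDual := by
      intro p q hpq
      have hlt : (p:ℕ) < (q:ℕ) := OrderDual.toDual_lt_toDual.mp hpq
      exact hv p ((q:ℕ):ℤ) (by exact_mod_cast hlt)
    rw [Matrix.det_of_lowerTriangular M htri]
    exact Finset.prod_eq_one fun p _ => hd p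
  rw [hMdet]; ring
end



/-- The shifted Hankel determinant `D₁ n = det (a (i+j+1) 0)_{i,j=0}^{n-1}` of an
admissible matrix satisfies `D₁ 0 = 1`, `D₁ 1 = s 0`, the recurrence
`D₁ n = s (n-1) * D₁ (n-1) - D₁ (n-2)` for `n ≥ 2`, and equals the determinant of the
`n × n` tridiagonal matrix with diagonal `s 0, …, s (n-1)` and `1`'s off the diagonal. -/
theorem admissible_shifted_hankel (s : ℕ → ℝ) (a : ℕ → ℤ → ℝ)
    (h0 : ∀ k : ℤ, a 0 k = if k = 0 then 1 else 0)
    (hneg : ∀ (n : ℕ) (k : ℤ), k < 0 → a n k = 0)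
    (hrec : ∀ (n : ℕ) (k : ℤ), 0 ≤ k →
      a (n + 1) k = a n (k - 1) + s k.toNat * a n k + a n (k + 1))
    (D : ℕ → ℝ)
    (hD : ∀ n : ℕ, D n = Matrix.det (Matrix.of fun i j : Fin n => a ((i : ℕ) + (j : ℕ) + 1) 0)) :
    D 0 = 1 ∧ D 1 = s 0 ∧
    (∀ n : ℕ, 2 ≤ n → D n = s (n - 1) * D (n - 1) - D (n - 2)) ∧
    (∀ n : ℕ, D n = Matrix.det (Matrix.of fun i j : Fin n =>
      if (i : ℕ) = (j : ℕ) then s i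
      else if (i : ℕ) + 1 = (j : ℕ) ∨ (j : ℕ) + 1 = (i : ℕ) then 1 else 0)) := by
  have hv := adm_vanish s a h0 hrec
  have hd := adm_diag s a h0 hrec
  have hmom := adm_mom s a h0 hneg hrec
  have hstep := adm_step s a hneg hrec hv
  have key : ∀ n : ℕ, D n = (triMat s n).det := fun n => by
    rw [hD n]; exact adm_hankel s a h0 hneg hrec hv hd hmom hstep n
  refine ⟨?_, ?_, ?_, ?_⟩
  · rw [key 0, Matrix.det_fin_zero]
  · rw [key 1, Matrix.det_fin_one]
    simp [triMat]
  · intro n hn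
    obtain ⟨m, rfl⟩ : ∃ m, n = m + 2 := ⟨n - 2, by omega⟩
    simp only [show m + 2 - 1 = m + 1 from rfl, show m + 2 - 2 = m from rfl]
    rw [key (m+2), key (m+1), key m]
    exact triMat_det_rec s m
  · intro n
    rw [key n]
    rfl
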